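/- Let Y₁(x,v,a) = (0,0,2v), Y₂(x,v,a) = (0,v,2a), Y₃(x,v,a) = (v,a,3a²/(2v)) on ℝ³, and let Y_α^[2](p₁,p₂) := (Y_α(p₁), Y_α(p₂)) denote their diagonal prolongations to ℝ⁶, with coordinates (x₁,v₁,a₁,x₂,v₂,a₂). The function C(x₁,v₁,a₁,x₂,v₂,a₂) = (a₂v₁ − a₁v₂)²/(v₁³v₂³) satisfies (fderiv ℝ C p)(Y_α^[2](p)) = 0 for α = 1,2,3 at every point p with v₁ ≠ 0 and v₂ ≠ 0. Hence C is a t-independent constant of motion of the diagonal prolongation of the Schwarzian system X_t = Y₃ + b₁(t)Y₁. -/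

import Mathlib

/-- Diagonal prolongations to `ℝ⁶` of the Vessiot--Guldberg vector fields of
the Schwarzian equation; coordinates
`(x₁,v₁,a₁,x₂,v₂,a₂) = (p 0, p 1, p 2, p 3, p 4, p 5)`. -/
noncomputable def schwarzY₁p : (Fin 6 → ℝ) → (Fin 6 → ℝ) :=
  fun p => ![0, 0, 2 * p 1, 0, 0, 2 * p 4]

noncomputable def schwarzY₂p : (Fin 6 → ℝ) → (Fin 6 → ℝ) :=
  fun p => ![0, p 1, 2 * p 2, 0, p 4, 2 * p 5]

noncomputable def schwarzY₃p : (Fin 6 → ℝ) → (Fin 6 → ℝ) :=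
  fun p => ![p 1, p 2, 3 * (p 2) ^ 2 / (2 * p 1),
             p 4, p 5, 3 * (p 5) ^ 2 / (2 * p 4)]

/-- `C = (a₂v₁ − a₁v₂)² / (v₁³v₂³)`. -/
noncomputable def schwarzC : (Fin 6 → ℝ) → ℝ :=
  fun p => (p 5 * p 1 - p 2 * p 4) ^ 2 / ((p 1) ^ 3 * (p 4) ^ 3)

theorem fderiv_schwarzC (p : Fin 6 → ℝ) (h1 : p 1 ≠ 0) (h4 : p 4 ≠ 0) (Y : Fin 6 → ℝ) :
    fderiv ℝ schwarzC p Y =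
      (2*(p 5 * p 1 - p 2 * p 4)*(p 5 * Y 1 + p 1 * Y 5 - p 2 * Y 4 - p 4 * Y 2)
        * (p 1 ^3 * p 4 ^3)
       - (p 5 * p 1 - p 2 * p 4)^2 * (3 * p 1 ^2 * Y 1 * p 4 ^3 + p 1 ^3 * 3 * p 4 ^2 * Y 4))
      / (p 1 ^3 * p 4 ^3)^2 := by
  have h := fun i : Fin 6 => hasFDerivAt_apply (𝕜 := ℝ) i p
  have hs := ((h 5).mul (h 1)).sub ((h 2).mul (h 4))
  have hf := hs.mul hs
  have hg := ((h 1).mul ((h 1).mul (h 1))).mul ((h 4).mul ((h 4).mul (h 4)))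
  have hgne : p 1 * (p 1 * p 1) * (p 4 * (p 4 * p 4)) ≠ 0 := by positivity
  have hginv := (hasFDerivAt_inv hgne).comp p hg
  have hC := hf.mul hginv
  have heq : schwarzC = fun q : Fin 6 → ℝ =>
      ((q 5 * q 1 - q 2 * q 4) * (q 5 * q 1 - q 2 * q 4)) *
      ((q 1 * (q 1 * q 1)) * (q 4 * (q 4 * q 4)))⁻¹ := by
    funext q; simp only [schwarzC, div_eq_mul_inv]; ring_nf
  simp only [Function.comp_def, Pi.mul_def, Pi.sub_def] at hC
  rw [heq, hC.fderiv]
  simp only [ContinuousLinearMap.smul_apply, ContinuousLinearMap.sub_apply,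
    ContinuousLinearMap.add_apply, ContinuousLinearMap.proj_apply, smul_eq_mul,
    ContinuousLinearMap.comp_apply, ContinuousLinearMap.smulRight_apply,
    ContinuousLinearMap.one_apply, Function.comp, ContinuousLinearMap.toSpanSingleton_apply]
  field_simp
  ring

lemma cons_val_five' (a b c d e f : ℝ) : (![a,b,c,d,e,f] : Fin 6 → ℝ) 5 = f := rfl

/-- `C = (a₂v₁ − a₁v₂)²/(v₁³v₂³)` is annihilated by the diagonal
prolongations of `Y₁, Y₂, Y₃` wherever `v₁ ≠ 0` and `v₂ ≠ 0`; hence it is a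
t-independent constant of motion of the prolonged Schwarzian system. -/
theorem schwarzian_constant_of_motion_C :
    ∀ p : Fin 6 → ℝ, p 1 ≠ 0 → p 4 ≠ 0 →
      fderiv ℝ schwarzC p (schwarzY₁p p) = 0 ∧
      fderiv ℝ schwarzC p (schwarzY₂p p) = 0 ∧
      fderiv ℝ schwarzC p (schwarzY₃p p) = 0 := by
  intro p h1 h4
  refine ⟨?_, ?_, ?_⟩ <;>
    rw [fderiv_schwarzC p h1 h4] <;>
    simp only [schwarzY₁p, schwarzY₂p, schwarzY₃p, Matrix.cons_val_zero,
      Matrix.cons_val_one, Matrix.head_cons, Matrix.cons_val_two, Matrix.tail_cons,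
      Matrix.cons_val_three, Matrix.cons_val_four, Matrix.cons_val_fin_one,
      Matrix.cons_val_succ, cons_val_five'] <;>
    field_simp <;> ring
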